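/- Let D be a finite multiset of instance values with P(D) ≥ 1 (the dataset) and let C ⊆ D be a sub-multiset with P(C) ≥ 1 (the cover of a pattern). Then oe(C) = max_{c ∈ C} PEN(c, C) − ARL(D) is a tight optimistic estimate for the relative average-ranking-loss interestingness φ^{rasl}: (i) for every sub-multiset C' ⊆ C with P(C') ≥ 1, ARL(C') − ARL(D) ≤ oe(C); and (ii) there exists a sub-multiset C' ⊆ C with P(C') ≥ 1 such that ARL(C') − ARL(D) = oe(C). -/

import Mathlib

/-- An instance value: a label (`true` = positive, i.e. `y = 1`;
`false` = negative, i.e. `y = 0`) together with a real prediction score. -/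
abbrev Inst : Type := Bool × ℝ

/-- `P C`: the number of positive elements of `C`. -/
def P (C : Multiset Inst) : ℕ := (C.filter (fun c => c.1 = true)).card

/-- `N C`: the number of negative elements of `C`. -/
def N (C : Multiset Inst) : ℕ := (C.filter (fun c => c.1 = false)).card

/-- The penalty `PEN c C`: the sum over all elements `(y, ŷ)` of `C` of
`[y = 0 ∧ ŷ > ŷ_c] + (1/2)·[y = 0 ∧ ŷ = ŷ_c]`. -/
noncomputable def PEN (c : Inst) (C : Multiset Inst) : ℝ :=
  (C.map (fun d => (if d.1 = false ∧ c.2 < d.2 then (1 : ℝ) else 0) +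
    (if d.1 = false ∧ d.2 = c.2 then (1 : ℝ) / 2 else 0))).sum

/-- The ranking loss `RL c C`: `PEN c C` if `c` is positive, and `0` otherwise. -/
noncomputable def RL (c : Inst) (C : Multiset Inst) : ℝ :=
  if c.1 = true then PEN c C else 0

/-- The average ranking loss `ARL C = (Σ_{c ∈ C} RL(c, C)) / P(C)`. -/
noncomputable def ARL (C : Multiset Inst) : ℝ :=
  (C.map (fun c => RL c C)).sum / (P C : ℝ)

/-- `max_{c ∈ C} RL(c, C)`: since all ranking losses are nonnegative, folding
`max` with base `0` over the multiset of ranking losses computes this maximum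
whenever `C` contains a positive element (i.e. `P C ≥ 1`).  When `P C ≥ 1`
this also equals `max_{c ∈ C, c positive} PEN(c, C)`. -/
noncomputable def maxRL (C : Multiset Inst) : ℝ :=
  ((C.map (fun c => RL c C)).toList).foldr max 0

/- ## Auxiliary lemmas -/

lemma foldr_max_nonneg (l : List ℝ) : 0 ≤ l.foldr max 0 := by
  induction l with
  | nil => simp
  | cons a l ih => exact le_trans ih (le_max_right _ _)

lemma le_foldr_max {l : List ℝ} {x : ℝ} (hx : x ∈ l) : x ≤ l.foldr max 0 := by
  induction l with
  | nil => simp at hx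
  | cons a l ih =>
    rcases List.mem_cons.1 hx with h | h
    · subst h; exact le_max_left _ _
    · exact le_trans (ih h) (le_max_right _ _)

lemma foldr_max_mem (l : List ℝ) : l.foldr max 0 = 0 ∨ l.foldr max 0 ∈ l := by
  induction l with
  | nil => simp
  | cons a l ih =>
    rcases max_choice a (l.foldr max 0) with h | h
    · right; simp only [List.foldr_cons, h]; exact List.mem_cons_self
    · rcases ih with h0 | hm
      · left
        simp only [List.foldr_cons, h, h0]
        exact max_eq_right (h0 ▸ sup_eq_right.mp h)
      · right; simp only [List.foldr_cons, h]; exact List.mem_cons_of_mem _ hm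

lemma PEN_nonneg (c : Inst) (C : Multiset Inst) : 0 ≤ PEN c C := by
  apply Multiset.sum_nonneg
  intro x hx
  obtain ⟨d, _, rfl⟩ := Multiset.mem_map.1 hx
  positivity

lemma RL_nonneg (c : Inst) (C : Multiset Inst) : 0 ≤ RL c C := by
  unfold RL; split
  · exact PEN_nonneg c C
  · exact le_refl 0

lemma PEN_mono (c : Inst) {C' C : Multiset Inst} (h : C' ≤ C) :
    PEN c C' ≤ PEN c C := by
  obtain ⟨u, rfl⟩ := Multiset.le_iff_exists_add.1 h
  unfold PEN
  rw [Multiset.map_add, Multiset.sum_add]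
  have : 0 ≤ (u.map (fun d => (if d.1 = false ∧ c.2 < d.2 then (1 : ℝ) else 0) +
      (if d.1 = false ∧ d.2 = c.2 then (1 : ℝ) / 2 else 0))).sum := by
    apply Multiset.sum_nonneg
    intro x hx
    obtain ⟨d, _, rfl⟩ := Multiset.mem_map.1 hx
    positivity
  linarith

lemma maxRL_nonneg (C : Multiset Inst) : 0 ≤ maxRL C := foldr_max_nonneg _

lemma RL_le_maxRL {c : Inst} {C : Multiset Inst} (hc : c ∈ C) :
    RL c C ≤ maxRL C := by
  apply le_foldr_max
  rw [Multiset.mem_toList]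
  exact Multiset.mem_map_of_mem _ hc

lemma exists_pos_mem {C : Multiset Inst} (hPC : 1 ≤ P C) :
    ∃ c ∈ C, c.1 = true := by
  have : (C.filter (fun c => c.1 = true)) ≠ 0 := by
    intro h; rw [P, h] at hPC; simp at hPC
  obtain ⟨c, hc⟩ := Multiset.exists_mem_of_ne_zero this
  exact ⟨c, (Multiset.mem_filter.1 hc).1, (Multiset.mem_filter.1 hc).2⟩

lemma exists_maxRL_attained {C : Multiset Inst} (hPC : 1 ≤ P C) :
    ∃ c ∈ C, c.1 = true ∧ RL c C = maxRL C := by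
  obtain ⟨cp, hcp, hcpt⟩ := exists_pos_mem hPC
  rcases foldr_max_mem ((C.map (fun c => RL c C)).toList) with h0 | hm
  · refine ⟨cp, hcp, hcpt, le_antisymm (RL_le_maxRL hcp) ?_⟩
    rw [maxRL, h0] at *
    rw [h0]
    exact RL_nonneg _ _
  · rw [Multiset.mem_toList, Multiset.mem_map] at hm
    obtain ⟨c, hc, hceq⟩ := hm
    by_cases hct : c.1 = true
    · exact ⟨c, hc, hct, hceq⟩
    · have h0 : maxRL C = 0 := by
        rw [maxRL, ← hceq, RL, if_neg hct]
      refine ⟨cp, hcp, hcpt, le_antisymm (RL_le_maxRL hcp) ?_⟩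
      rw [h0]; exact RL_nonneg _ _

lemma sum_map_ite (M : ℝ) (C : Multiset Inst) :
    (C.map (fun c => if c.1 = true then M else 0)).sum = (P C : ℝ) * M := by
  induction C using Multiset.induction_on with
  | empty => simp [P]
  | cons a C ih =>
    by_cases ha : a.1 = true
    · simp only [Multiset.map_cons, Multiset.sum_cons, ih, if_pos ha, P,
        Multiset.filter_cons, if_pos ha]
      simp [P]
      push_cast
      ring
    · simp only [Multiset.map_cons, Multiset.sum_cons, ih, if_neg ha, P,
        Multiset.filter_cons, if_neg ha]
      simp [P]

lemma P_le_ARL_bound {C' C : Multiset Inst} (hsub : C' ≤ C) (hPC' : 1 ≤ P C') :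
    ARL C' ≤ maxRL C := by
  have hsum : (C'.map (fun c => RL c C')).sum ≤
      (C'.map (fun c => if c.1 = true then maxRL C else 0)).sum := by
    apply Multiset.sum_map_le_sum_map
    intro c hc
    by_cases hct : c.1 = true
    · rw [if_pos hct, RL, if_pos hct]
      calc PEN c C' ≤ PEN c C := PEN_mono c hsub
        _ = RL c C := by rw [RL, if_pos hct]
        _ ≤ maxRL C := RL_le_maxRL (Multiset.mem_of_le hsub hc)
    · rw [if_neg hct, RL, if_neg hct]
  rw [sum_map_ite] at hsum
  have hP : (0 : ℝ) < (P C' : ℝ) := by exact_mod_cast hPC'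
  rw [ARL, div_le_iff₀ hP]
  linarith [hsum]


/-- For a dataset `D` and a cover `C ⊆ D` (both containing a
positive element), `oe(C) = max_{positive c ∈ C} PEN(c, C) − ARL(D)`
(which equals `maxRL C − ARL D`) is a tight optimistic estimate for the
relative average-ranking-loss interestingness `φ^{rasl}(C') = ARL(C') − ARL(D)`. -/
theorem maxRL_tight_optimistic_estimate_rasl (D C : Multiset Inst)
    (hPD : 1 ≤ P D) (hsub : C ≤ D) (hPC : 1 ≤ P C) :
    (∀ C' ≤ C, 1 ≤ P C' → ARL C' - ARL D ≤ maxRL C - ARL D) ∧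
    (∃ C' ≤ C, 1 ≤ P C' ∧ ARL C' - ARL D = maxRL C - ARL D) := by
  constructor
  · intro C' hC' hPC'
    have := P_le_ARL_bound hC' hPC'
    linarith
  · obtain ⟨cs, hcs, hcst, hcsmax⟩ := exists_maxRL_attained hPC
    set negC := C.filter (fun c => c.1 = false) with hnegC
    refine ⟨cs ::ₘ negC, ?_, ?_, ?_⟩
    · -- cs ::ₘ negC ≤ C
      have h1 : C = negC + C.filter (fun c => ¬ c.1 = false) := by
        rw [hnegC, Multiset.filter_add_not]
      have h2 : ({cs} : Multiset Inst) ≤ C.filter (fun c => ¬ c.1 = false) := by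
        rw [Multiset.singleton_le, Multiset.mem_filter]
        exact ⟨hcs, by simp [hcst]⟩
      calc cs ::ₘ negC = {cs} + negC := by rw [Multiset.singleton_add]
        _ ≤ C.filter (fun c => ¬ c.1 = false) + negC := add_le_add h2 (le_refl _)
        _ = negC + C.filter (fun c => ¬ c.1 = false) := add_comm _ _
        _ = C := h1.symm
    · -- 1 ≤ P (cs ::ₘ negC)
      have : P (cs ::ₘ negC) = 1 := by
        rw [P, Multiset.filter_cons, if_pos hcst]
        have : (negC.filter (fun c => c.1 = true)) = 0 := by
          rw [Multiset.filter_eq_nil]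
          intro a ha
          have := (Multiset.mem_filter.1 ha).2
          simp at this ⊢
          simp [this]
        rw [this]
        simp
      omega
    · -- ARL equality
      have hPone : P (cs ::ₘ negC) = 1 := by
        rw [P, Multiset.filter_cons, if_pos hcst]
        have : (negC.filter (fun c => c.1 = true)) = 0 := by
          rw [Multiset.filter_eq_nil]
          intro a ha
          have := (Multiset.mem_filter.1 ha).2
          simp at this ⊢
          simp [this]
        rw [this]
        simp
      have hPENeq : PEN cs (cs ::ₘ negC) = PEN cs C := by
        set f := fun d : Inst => (if d.1 = false ∧ cs.2 < d.2 then (1 : ℝ) else 0) +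
          (if d.1 = false ∧ d.2 = cs.2 then (1 : ℝ) / 2 else 0) with hf
        have hfcs : f cs = 0 := by simp [hf, hcst]
        have hC : C = negC + C.filter (fun c => ¬ c.1 = false) := by
          rw [hnegC, Multiset.filter_add_not]
        have hposzero : ((C.filter (fun c => ¬ c.1 = false)).map f).sum = 0 := by
          apply Multiset.sum_eq_zero
          intro x hx
          obtain ⟨d, hd, rfl⟩ := Multiset.mem_map.1 hx
          have : ¬ d.1 = false := (Multiset.mem_filter.1 hd).2
          simp [hf, this]
        calc PEN cs (cs ::ₘ negC) = f cs + (negC.map f).sum := by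
              rw [PEN, Multiset.map_cons, Multiset.sum_cons]
          _ = (negC.map f).sum := by rw [hfcs, zero_add]
          _ = (negC.map f).sum + ((C.filter (fun c => ¬ c.1 = false)).map f).sum := by
              rw [hposzero, add_zero]
          _ = PEN cs C := by
              rw [PEN]
              conv_rhs => rw [hC]
              rw [Multiset.map_add, Multiset.sum_add, ← hf]
      have hsum : ((cs ::ₘ negC).map (fun c => RL c (cs ::ₘ negC))).sum = maxRL C := by
        rw [Multiset.map_cons, Multiset.sum_cons]
        have hzero : (negC.map (fun c => RL c (cs ::ₘ negC))).sum = 0 := by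
          apply Multiset.sum_eq_zero
          intro x hx
          obtain ⟨d, hd, rfl⟩ := Multiset.mem_map.1 hx
          have : d.1 = false := (Multiset.mem_filter.1 hd).2
          rw [RL, if_neg (by simp [this])]
        rw [hzero, add_zero, RL, if_pos hcst, hPENeq]
        rw [RL, if_pos hcst] at hcsmax
        exact hcsmax
      rw [ARL, hsum, hPone]
      simp
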